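/- Let X₁, X₂ be independent with Xᵢ ~ EG₂(θᵢ, φ, αᵢ) and X₁*, X₂* be independent with Xᵢ* ~ EG₂(θᵢ*, φ, αᵢ*). Suppose α₁, α₂ ≥ 1, (α₁-α₂)(θ₁-θ₂) ≤ 0 (the parameter matrix is in T₂) and [[α₁*, α₂*], [θ₁*, θ₂*]] = [[α₁, α₂], [θ₁, θ₂]]·T_w for some T-transform matrix T_w, w ∈ [0,1]. Then max(X₁*, X₂*) ≤_st max(X₁, X₂), i.e., for all x > 0, (1-(1-e^(-θ₁x^(-φ)))^(α₁))·(1-(1-e^(-θ₂x^(-φ)))^(α₂)) ≤ (1-(1-e^(-θ₁*x^(-φ)))^(α₁*))·(1-(1-e^(-θ₂*x^(-φ)))^(α₂*)). -/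

import Mathlib

open Real Set


noncomputable def gfun (x : ℝ) : ℝ := (Real.exp x - 1) / x

lemma gfun_hasDerivAt {x : ℝ} (hx : x ≠ 0) :
    HasDerivAt gfun ((Real.exp x * x - (Real.exp x - 1) * 1) / x ^ 2) x :=
  ((Real.hasDerivAt_exp x).sub_const 1).div (hasDerivAt_id x) hx

lemma gfun_deriv_nonneg (x : ℝ) : 0 ≤ Real.exp x * x - (Real.exp x - 1) * 1 := by
  have h := Real.add_one_le_exp (-x)
  have h2 : (-x + 1) * Real.exp x ≤ Real.exp (-x) * Real.exp x :=
    mul_le_mul_of_nonneg_right h (Real.exp_pos x).le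
  rw [← Real.exp_add, neg_add_cancel, Real.exp_zero] at h2
  nlinarith

lemma gfun_mono_pos : MonotoneOn gfun (Ioi 0) := by
  apply monotoneOn_of_deriv_nonneg (convex_Ioi 0)
  · intro x hx
    exact (gfun_hasDerivAt (ne_of_gt hx)).continuousAt.continuousWithinAt
  · intro x hx
    rw [interior_Ioi] at hx
    exact (gfun_hasDerivAt (ne_of_gt hx)).differentiableAt.differentiableWithinAt
  · intro x hx
    rw [interior_Ioi] at hx
    rw [(gfun_hasDerivAt (ne_of_gt hx)).deriv]
    exact div_nonneg (gfun_deriv_nonneg x) (sq_nonneg x)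

lemma gfun_mono_neg : MonotoneOn gfun (Iio 0) := by
  apply monotoneOn_of_deriv_nonneg (convex_Iio 0)
  · intro x hx
    exact (gfun_hasDerivAt (ne_of_lt hx)).continuousAt.continuousWithinAt
  · intro x hx
    rw [interior_Iio] at hx
    exact (gfun_hasDerivAt (ne_of_lt hx)).differentiableAt.differentiableWithinAt
  · intro x hx
    rw [interior_Iio] at hx
    rw [(gfun_hasDerivAt (ne_of_lt hx)).deriv]
    exact div_nonneg (gfun_deriv_nonneg x) (sq_nonneg x)

lemma exp_sub_one_pos {x : ℝ} (hx : 0 < x) : 0 < Real.exp x - 1 := by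
  have := Real.add_one_lt_exp (ne_of_gt hx)
  linarith

lemma gfun_pos_of_pos {x : ℝ} (hx : 0 < x) : 0 < gfun x :=
  div_pos (exp_sub_one_pos hx) hx

lemma gfun_pos_of_neg {x : ℝ} (hx : x < 0) : 0 < gfun x := by
  have h1 : Real.exp x - 1 < 0 := by
    have := Real.exp_lt_one_iff.mpr hx; linarith
  exact div_pos_of_neg_of_neg h1 hx



-- σ/(e^{σm}-1) = 1/(m * gfun (σ m))
lemma q_eq {σ m : ℝ} (hσ : 0 < σ) (hm : 0 < m) :
    σ / (Real.exp (σ * m) - 1) = 1 / (m * gfun (σ * m)) := by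
  have h1 : 0 < Real.exp (σ * m) - 1 := exp_sub_one_pos (mul_pos hσ hm)
  unfold gfun
  field_simp

lemma q_le {σ₁ σ₂ m₁ m₂ : ℝ} (h1 : 0 < σ₁) (h12 : σ₁ ≤ σ₂) (hm1 : 0 < m₁) (hm : m₁ ≤ m₂) :
    σ₂ / (Real.exp (σ₂ * m₂) - 1) ≤ σ₁ / (Real.exp (σ₁ * m₁) - 1) := by
  have h2 : 0 < σ₂ := lt_of_lt_of_le h1 h12
  have hm2 : 0 < m₂ := lt_of_lt_of_le hm1 hm
  rw [q_eq h1 hm1, q_eq h2 hm2]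
  have hx : (0:ℝ) < σ₁ * m₁ := mul_pos h1 hm1
  have hy : (0:ℝ) < σ₂ * m₂ := mul_pos h2 hm2
  have hxy : σ₁ * m₁ ≤ σ₂ * m₂ := mul_le_mul h12 hm hm1.le h2.le
  have hg : gfun (σ₁ * m₁) ≤ gfun (σ₂ * m₂) := gfun_mono_pos hx hy hxy
  have hgp : 0 < gfun (σ₁ * m₁) := gfun_pos_of_pos hx
  apply one_div_le_one_div_of_le (mul_pos hm1 hgp)
  exact mul_le_mul hm hg hgp.le hm2.le



lemma bernoulli_aux {E d : ℝ} (hE : 1 < E) (hd : 1 ≤ d) :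
    E ^ d - 1 ≤ d * E ^ (d - 1) * (E - 1) := by
  have hE0 : (0:ℝ) < E := lt_trans one_pos hE
  have hs : (-1:ℝ) ≤ 1 / E - 1 := by
    have : 0 < 1 / E := by positivity
    linarith
  have hber := one_add_mul_self_le_rpow_one_add hs hd
  have h1E : (1 : ℝ) + (1 / E - 1) = 1 / E := by ring
  rw [h1E] at hber
  have hinv : (1 / E : ℝ) ^ d = E ^ (-d) := by
    rw [one_div, ← Real.rpow_neg_one E, ← Real.rpow_mul hE0.le]
    norm_num
  rw [hinv] at hber
  -- hber : 1 + d * (1/E - 1) ≤ E^(-d)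
  have hEd : (0:ℝ) < E ^ d := Real.rpow_pos_of_pos hE0 d
  have hkey := mul_le_mul_of_nonneg_right hber hEd.le
  rw [← Real.rpow_add hE0] at hkey
  simp only [neg_add_cancel, Real.rpow_zero] at hkey
  -- hkey : (1 + d*(1/E-1)) * E^d ≤ 1
  have hEd1 : E ^ (d - 1) * E = E ^ d := by
    rw [Real.rpow_sub hE0, Real.rpow_one]
    field_simp
  have hdiv : (1 / E) * E ^ d = E ^ (d - 1) := by
    field_simp
    rw [← hEd1]; ring
  nlinarith [hEd, Real.rpow_pos_of_pos hE0 (d-1)]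

lemma psi_mono {d : ℝ} (hd : 1 ≤ d) :
    MonotoneOn (fun E : ℝ => (E ^ d - 1) / (E - 1)) (Ioi 1) := by
  have hder : ∀ E : ℝ, 1 < E → HasDerivAt (fun E : ℝ => (E ^ d - 1) / (E - 1))
      ((d * E ^ (d-1) * (E - 1) - (E ^ d - 1) * 1) / (E - 1) ^ 2) E := by
    intro E hE
    have h1 : HasDerivAt (fun E : ℝ => E ^ d - 1) (d * E ^ (d-1)) E :=
      (Real.hasDerivAt_rpow_const (Or.inl (by linarith))).sub_const 1
    have h2 : HasDerivAt (fun E : ℝ => E - 1) 1 E := (hasDerivAt_id E).sub_const 1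
    exact h1.div h2 (by linarith)
  apply monotoneOn_of_deriv_nonneg (convex_Ioi 1)
  · intro E hE; exact (hder E hE).continuousAt.continuousWithinAt
  · intro E hE; rw [interior_Ioi] at hE
    exact (hder E hE).differentiableAt.differentiableWithinAt
  · intro E hE; rw [interior_Ioi] at hE
    rw [(hder E hE).deriv]
    apply div_nonneg _ (sq_nonneg _)
    have := bernoulli_aux hE hd
    linarith



lemma T_eq {σ α : ℝ} (hσ : 0 < σ) (hα : 0 < α) :
    α * (Real.exp σ - 1) / (Real.exp (σ * α) - 1) = gfun σ / gfun (σ * α) := by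
  have h1 : 0 < Real.exp (σ * α) - 1 := exp_sub_one_pos (mul_pos hσ hα)
  unfold gfun
  field_simp

lemma exp_rpow (σ d : ℝ) : (Real.exp σ) ^ d = Real.exp (σ * d) := by
  rw [Real.rpow_def_of_pos (Real.exp_pos σ), Real.log_exp]

lemma T_le {σ₁ σ₂ c d : ℝ} (h2 : 0 < σ₂) (h21 : σ₂ ≤ σ₁) (hd : 1 ≤ d) (hdc : d ≤ c) :
    c * (Real.exp σ₁ - 1) / (Real.exp (σ₁ * c) - 1) ≤
      d * (Real.exp σ₂ - 1) / (Real.exp (σ₂ * d) - 1) := by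
  have h1 : 0 < σ₁ := lt_of_lt_of_le h2 h21
  have hd0 : (0:ℝ) < d := lt_of_lt_of_le one_pos hd
  have hc0 : (0:ℝ) < c := lt_of_lt_of_le hd0 hdc
  -- first: decrease exponent c to d at σ₁
  have step1 : c * (Real.exp σ₁ - 1) / (Real.exp (σ₁ * c) - 1) ≤
      d * (Real.exp σ₁ - 1) / (Real.exp (σ₁ * d) - 1) := by
    rw [T_eq h1 hc0, T_eq h1 hd0]
    have hg1 : gfun (σ₁ * d) ≤ gfun (σ₁ * c) :=
      gfun_mono_pos (mul_pos h1 hd0) (mul_pos h1 hc0)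
        (mul_le_mul_of_nonneg_left hdc h1.le)
    have hgd : 0 < gfun (σ₁ * d) := gfun_pos_of_pos (mul_pos h1 hd0)
    have hgσ : 0 < gfun σ₁ := gfun_pos_of_pos h1
    exact div_le_div_of_nonneg_left hgσ.le hgd hg1
  -- second: decrease σ₁ to σ₂ at exponent d
  have step2 : d * (Real.exp σ₁ - 1) / (Real.exp (σ₁ * d) - 1) ≤
      d * (Real.exp σ₂ - 1) / (Real.exp (σ₂ * d) - 1) := by
    have hE2 : (1:ℝ) < Real.exp σ₂ := by
      rw [← Real.exp_zero]; exact Real.exp_lt_exp.mpr h2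
    have hE1 : (1:ℝ) < Real.exp σ₁ := by
      rw [← Real.exp_zero]; exact Real.exp_lt_exp.mpr h1
    have hψ := psi_mono hd (mem_Ioi.mpr hE2) (mem_Ioi.mpr hE1)
      (Real.exp_le_exp.mpr h21)
    simp only [exp_rpow] at hψ
    -- hψ : (exp(σ₂ d)-1)/(exp σ₂ - 1) ≤ (exp(σ₁ d)-1)/(exp σ₁ -1)
    have p1 : 0 < Real.exp (σ₁ * d) - 1 := exp_sub_one_pos (mul_pos h1 hd0)
    have p2 : 0 < Real.exp (σ₂ * d) - 1 := exp_sub_one_pos (mul_pos h2 hd0)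
    have q1 : 0 < Real.exp σ₁ - 1 := exp_sub_one_pos h1
    have q2 : 0 < Real.exp σ₂ - 1 := exp_sub_one_pos h2
    rw [div_le_div_iff₀ (by positivity) (by positivity)]
    rw [div_le_div_iff₀ (by positivity) (by positivity)] at hψ
    nlinarith
  exact le_trans step1 step2


noncomputable def Wfun (α s : ℝ) : ℝ :=
  Real.exp (-s) / (1 - Real.exp (-s)) * α * Real.exp (Real.log (1 - Real.exp (-s)) * α) /
    (1 - Real.exp (Real.log (1 - Real.exp (-s)) * α))

lemma v_pos {s : ℝ} (hs : 0 < s) : 0 < 1 - Real.exp (-s) := by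
  have : Real.exp (-s) < 1 := Real.exp_lt_one_iff.mpr (by linarith)
  linarith

lemma v_lt_one (s : ℝ) : 1 - Real.exp (-s) < 1 := by
  have := Real.exp_pos (-s); linarith

lemma logv_neg {s : ℝ} (hs : 0 < s) : Real.log (1 - Real.exp (-s)) < 0 :=
  Real.log_neg (v_pos hs) (v_lt_one s)

lemma inner_lt_one {α s : ℝ} (hα : 0 < α) (hs : 0 < s) :
    Real.exp (Real.log (1 - Real.exp (-s)) * α) < 1 :=
  Real.exp_lt_one_iff.mpr (mul_neg_of_neg_of_pos (logv_neg hs) hα)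

lemma piece_hasDeriv {α s : ℝ} (hα : 0 < α) (hs : 0 < s) :
    HasDerivAt (fun s => Real.log (1 - Real.exp (Real.log (1 - Real.exp (-s)) * α)))
      (-(Wfun α s)) s := by
  have hv : 0 < 1 - Real.exp (-s) := v_pos hs
  have hil : Real.exp (Real.log (1 - Real.exp (-s)) * α) < 1 := inner_lt_one hα hs
  have h1 : HasDerivAt (fun s : ℝ => -s) (-1) s := (hasDerivAt_id s).neg
  have h2 := h1.exp
  have h3 := h2.const_sub 1
  have h4 := h3.log (ne_of_gt hv)
  have h5 := h4.mul_const α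
  have h6 := h5.exp
  have h7 := h6.const_sub 1
  have h8 := h7.log (sub_pos.mpr hil).ne'
  convert h8 using 1
  unfold Wfun
  ring

lemma sigma_pos {s : ℝ} (hs : 0 < s) : 0 < -Real.log (1 - Real.exp (-s)) := by
  have := logv_neg hs; linarith

lemma alg_aux {V B α : ℝ} (hV : 1 - V ≠ 0) (hB : B ≠ 0) (hB1 : 1 - B ≠ 0) :
    V / (1 - V) * α * B / (1 - B) = α * ((1 - V)⁻¹ - 1) / (B⁻¹ - 1) := by
  have e1 : B⁻¹ - 1 = (1 - B) / B := by
    rw [eq_div_iff hB, sub_mul, inv_mul_cancel₀ hB]; ring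
  have e2 : (1 - V)⁻¹ - 1 = V / (1 - V) := by
    rw [eq_div_iff hV, sub_mul, inv_mul_cancel₀ hV]; ring
  rw [e1, e2, div_div_eq_mul_div]
  ring

lemma Wfun_eq {α s : ℝ} (hα : 0 < α) (hs : 0 < s) :
    Wfun α s = α * (Real.exp (-Real.log (1 - Real.exp (-s))) - 1) /
      (Real.exp (-Real.log (1 - Real.exp (-s)) * α) - 1) := by
  have hv0 : 0 < 1 - Real.exp (-s) := v_pos hs
  have hB0 : 0 < Real.exp (Real.log (1 - Real.exp (-s)) * α) := Real.exp_pos _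
  have hB1 : Real.exp (Real.log (1 - Real.exp (-s)) * α) < 1 := inner_lt_one hα hs
  have h1 : Real.exp (-Real.log (1 - Real.exp (-s))) = (1 - Real.exp (-s))⁻¹ := by
    rw [Real.exp_neg, Real.exp_log hv0]
  have h2 : Real.exp (-Real.log (1 - Real.exp (-s)) * α)
      = (Real.exp (Real.log (1 - Real.exp (-s)) * α))⁻¹ := by
    rw [← Real.exp_neg]; ring_nf
  rw [Wfun, h1, h2]
  exact alg_aux (ne_of_gt hv0) (ne_of_gt hB0) (ne_of_gt (by linarith))

lemma W_le {sa sb c d : ℝ} (h0 : 0 < sa) (hab : sa ≤ sb) (hd : 1 ≤ d) (hdc : d ≤ c) :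
    Wfun c sa ≤ Wfun d sb := by
  have hsb : 0 < sb := lt_of_lt_of_le h0 hab
  have hd0 : (0:ℝ) < d := lt_of_lt_of_le one_pos hd
  have hc0 : (0:ℝ) < c := lt_of_lt_of_le hd0 hdc
  rw [Wfun_eq hc0 h0, Wfun_eq hd0 hsb]
  set σa := -Real.log (1 - Real.exp (-sa)) with hσa
  set σb := -Real.log (1 - Real.exp (-sb)) with hσb
  have hσb0 : 0 < σb := sigma_pos hsb
  have hσba : σb ≤ σa := by
    rw [hσa, hσb, neg_le_neg_iff]
    apply Real.log_le_log (v_pos h0)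
    have := Real.exp_le_exp.mpr (neg_le_neg hab)
    linarith
  exact T_le hσb0 hσba hd hdc

lemma step2 {s₁ s₂ s₁' s₂' c d : ℝ} (h0 : 0 < s₁) (ha : s₁ ≤ s₁') (hb : s₁' ≤ s₂')
    (hc2 : s₂' ≤ s₂) (hsum : s₁ + s₂ = s₁' + s₂') (hd : 1 ≤ d) (hdc : d ≤ c) :
    (1 - (1 - Real.exp (-s₁)) ^ c) * (1 - (1 - Real.exp (-s₂)) ^ d) ≤
      (1 - (1 - Real.exp (-s₁')) ^ c) * (1 - (1 - Real.exp (-s₂')) ^ d) := by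
  have hd0 : (0:ℝ) < d := lt_of_lt_of_le one_pos hd
  have hc0 : (0:ℝ) < c := lt_of_lt_of_le hd0 hdc
  have h01' : 0 < s₁' := lt_of_lt_of_le h0 ha
  have h02' : 0 < s₂' := lt_of_lt_of_le h01' hb
  have h02 : 0 < s₂ := lt_of_lt_of_le h02' hc2
  set δ := s₁' - s₁ with hδ
  have hδ0 : 0 ≤ δ := by simp [hδ]; linarith
  have hs2 : s₂ = s₂' + δ := by rw [hδ]; linarith
  set Φ : ℝ → ℝ := fun τ =>
    Real.log (1 - Real.exp (Real.log (1 - Real.exp (-(s₁ + τ))) * c)) -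
      Real.log (1 - Real.exp (Real.log (1 - Real.exp (-(s₂' + τ))) * d)) with hΦ
  have hΦder : ∀ τ : ℝ, 0 ≤ τ →
      HasDerivAt Φ (Wfun d (s₂' + τ) - Wfun c (s₁ + τ)) τ := by
    intro τ hτ
    have hshift1 : HasDerivAt (fun τ : ℝ => s₁ + τ) 1 τ := (hasDerivAt_id τ).const_add s₁
    have hshift2 : HasDerivAt (fun τ : ℝ => s₂' + τ) 1 τ := (hasDerivAt_id τ).const_add s₂'
    have hp1 := (piece_hasDeriv hc0 (by linarith : 0 < s₁ + τ)).comp τ hshift1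
    have hp2 := (piece_hasDeriv hd0 (by linarith : 0 < s₂' + τ)).comp τ hshift2
    have := hp1.sub hp2
    exact this.congr_deriv (by ring)
  have hmono : MonotoneOn Φ (Icc 0 δ) := by
    apply monotoneOn_of_deriv_nonneg (convex_Icc 0 δ)
    · intro τ hτ
      exact (hΦder τ hτ.1).continuousAt.continuousWithinAt
    · intro τ hτ
      rw [interior_Icc] at hτ
      exact (hΦder τ hτ.1.le).differentiableAt.differentiableWithinAt
    · intro τ hτ
      rw [interior_Icc] at hτ
      rw [(hΦder τ hτ.1.le).deriv]
      obtain ⟨hτ1, hτ2⟩ := hτ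
      have := W_le (by linarith : 0 < s₁ + τ) (by linarith : s₁ + τ ≤ s₂' + τ) hd hdc
      linarith
  have hkey := hmono (left_mem_Icc.mpr hδ0) (right_mem_Icc.mpr hδ0) hδ0
  rw [hΦ] at hkey
  simp only [add_zero] at hkey
  have e1 : s₁ + δ = s₁' := by rw [hδ]; ring
  rw [e1, ← hs2] at hkey
  -- convert rpow form
  have hrw : ∀ s α : ℝ, 0 < s → (1 - Real.exp (-s)) ^ α = Real.exp (Real.log (1 - Real.exp (-s)) * α) := by
    intro s α hs
    rw [Real.rpow_def_of_pos (v_pos hs)]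
  rw [hrw s₁ c h0, hrw s₂ d h02, hrw s₁' c h01', hrw s₂' d h02']
  have p1 : 0 < 1 - Real.exp (Real.log (1 - Real.exp (-s₁)) * c) := by
    have := inner_lt_one hc0 h0; linarith
  have p2 : 0 < 1 - Real.exp (Real.log (1 - Real.exp (-s₂)) * d) := by
    have := inner_lt_one hd0 h02; linarith
  have p3 : 0 < 1 - Real.exp (Real.log (1 - Real.exp (-s₁')) * c) := by
    have := inner_lt_one hc0 h01'; linarith
  have p4 : 0 < 1 - Real.exp (Real.log (1 - Real.exp (-s₂')) * d) := by
    have := inner_lt_one hd0 h02'; linarith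
  rw [← Real.log_le_log_iff (mul_pos p1 p2) (mul_pos p3 p4), Real.log_mul (ne_of_gt p1) (ne_of_gt p2),
    Real.log_mul (ne_of_gt p3) (ne_of_gt p4)]
  linarith


lemma inner_lt_one' {Z m : ℝ} (hZ0 : 0 < Z) (hZ1 : Z < 1) (hm : 0 < m) :
    Real.exp (Real.log Z * m) < 1 :=
  Real.exp_lt_one_iff.mpr (mul_neg_of_neg_of_pos (Real.log_neg hZ0 hZ1) hm)

lemma deriv1_eq {Z m : ℝ} (hZ0 : 0 < Z) (hZ1 : Z < 1) (hm : 0 < m) :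
    -(Real.exp (Real.log Z * m) * (Real.log Z * 1)) / (1 - Real.exp (Real.log Z * m)) =
      (-Real.log Z) / (Real.exp (-Real.log Z * m) - 1) := by
  have hσ : 0 < -Real.log Z := by have := Real.log_neg hZ0 hZ1; linarith
  have hE1 : 0 < Real.exp (-Real.log Z * m) - 1 := exp_sub_one_pos (mul_pos hσ hm)
  have hEinv : Real.exp (Real.log Z * m) = (Real.exp (-Real.log Z * m))⁻¹ := by
    rw [← Real.exp_neg]; ring_nf
  rw [hEinv]
  set E := Real.exp (-Real.log Z * m) with hE
  have hE0 : 0 < E := Real.exp_pos _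
  have h : 1 - E⁻¹ = (E - 1) / E := by
    rw [eq_div_iff (ne_of_gt hE0), sub_mul, inv_mul_cancel₀ (ne_of_gt hE0)]; ring
  rw [h, div_div_eq_mul_div, div_eq_div_iff (ne_of_gt hE1) (ne_of_gt hE1)]
  field_simp

lemma step1 {X Y a b c d : ℝ} (hX : 0 < X) (hXY : X ≤ Y) (hY1 : Y < 1) (hb : 1 ≤ b)
    (hbd : b ≤ d) (hdc : d ≤ c) (hca : c ≤ a) (hsum : a + b = c + d) :
    (1 - X ^ a) * (1 - Y ^ b) ≤ (1 - X ^ c) * (1 - Y ^ d) := by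
  have hY0 : 0 < Y := lt_of_lt_of_le hX hXY
  have hX1 : X < 1 := lt_of_le_of_lt hXY hY1
  have hb0 : (0:ℝ) < b := lt_of_lt_of_le one_pos hb
  have hd0 : (0:ℝ) < d := lt_of_lt_of_le hb0 hbd
  have hc0 : (0:ℝ) < c := lt_of_lt_of_le hd0 hdc
  have ha0 : (0:ℝ) < a := lt_of_lt_of_le hc0 hca
  set δ := a - c with hδ
  have hδ0 : 0 ≤ δ := by rw [hδ]; linarith
  have hbδ : b + δ = d := by rw [hδ]; linarith
  have hcδ : c + δ = a := by rw [hδ]; ring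
  set Ψ : ℝ → ℝ := fun τ =>
    Real.log (1 - Real.exp (Real.log Y * (b + τ))) -
      Real.log (1 - Real.exp (Real.log X * (c + τ))) with hΨ
  have hΨder : ∀ τ : ℝ, 0 ≤ τ →
      HasDerivAt Ψ
        (-(Real.exp (Real.log Y * (b + τ)) * (Real.log Y * 1)) / (1 - Real.exp (Real.log Y * (b + τ)))
          - -(Real.exp (Real.log X * (c + τ)) * (Real.log X * 1)) / (1 - Real.exp (Real.log X * (c + τ)))) τ := by
    intro τ hτ
    have hinY : HasDerivAt (fun τ : ℝ => Real.log Y * (b + τ)) (Real.log Y * 1) τ :=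
      ((hasDerivAt_id τ).const_add b).const_mul (Real.log Y)
    have hinX : HasDerivAt (fun τ : ℝ => Real.log X * (c + τ)) (Real.log X * 1) τ :=
      ((hasDerivAt_id τ).const_add c).const_mul (Real.log X)
    have hpY := (hinY.exp.const_sub 1).log
      (ne_of_gt (by have := inner_lt_one' hY0 hY1 (by linarith : 0 < b + τ); linarith))
    have hpX := (hinX.exp.const_sub 1).log
      (ne_of_gt (by have := inner_lt_one' hX hX1 (by linarith : 0 < c + τ); linarith))
    exact hpY.sub hpX
  have hmono : MonotoneOn Ψ (Icc 0 δ) := by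
    apply monotoneOn_of_deriv_nonneg (convex_Icc 0 δ)
    · intro τ hτ
      exact (hΨder τ hτ.1).continuousAt.continuousWithinAt
    · intro τ hτ
      rw [interior_Icc] at hτ
      exact (hΨder τ hτ.1.le).differentiableAt.differentiableWithinAt
    · intro τ hτ
      rw [interior_Icc] at hτ
      obtain ⟨hτ1, hτ2⟩ := hτ
      rw [(hΨder τ hτ1.le).deriv]
      rw [deriv1_eq hY0 hY1 (by linarith : 0 < b + τ),
        deriv1_eq hX hX1 (by linarith : 0 < c + τ)]
      have hσY : 0 < -Real.log Y := by have := Real.log_neg hY0 hY1; linarith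
      have hσYX : -Real.log Y ≤ -Real.log X := by
        have := Real.log_le_log hX hXY; linarith
      have := q_le hσY hσYX (by linarith : 0 < b + τ) (by linarith : b + τ ≤ c + τ)
      linarith
  have hkey := hmono (left_mem_Icc.mpr hδ0) (right_mem_Icc.mpr hδ0) hδ0
  rw [hΨ] at hkey
  simp only [add_zero] at hkey
  rw [hbδ, hcδ] at hkey
  have hrwX : ∀ α : ℝ, X ^ α = Real.exp (Real.log X * α) := fun α => Real.rpow_def_of_pos hX α
  have hrwY : ∀ α : ℝ, Y ^ α = Real.exp (Real.log Y * α) := fun α => Real.rpow_def_of_pos hY0 α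
  rw [hrwX, hrwX, hrwY, hrwY]
  have p1 : 0 < 1 - Real.exp (Real.log X * a) := by
    have := inner_lt_one' hX hX1 ha0; linarith
  have p2 : 0 < 1 - Real.exp (Real.log Y * b) := by
    have := inner_lt_one' hY0 hY1 hb0; linarith
  have p3 : 0 < 1 - Real.exp (Real.log X * c) := by
    have := inner_lt_one' hX hX1 hc0; linarith
  have p4 : 0 < 1 - Real.exp (Real.log Y * d) := by
    have := inner_lt_one' hY0 hY1 hd0; linarith
  rw [← Real.log_le_log_iff (mul_pos p1 p2) (mul_pos p3 p4),
    Real.log_mul (ne_of_gt p1) (ne_of_gt p2), Real.log_mul (ne_of_gt p3) (ne_of_gt p4)]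
  linarith


lemma core {t θ₁ θ₂ a b w : ℝ} (ht : 0 < t) (hθ₁ : 0 < θ₁) (h12 : θ₁ ≤ θ₂) (hb : 1 ≤ b)
    (hba : b ≤ a) (hw : 1/2 ≤ w) (hw1 : w ≤ 1) :
    (1 - (1 - Real.exp (-(θ₁ * t))) ^ a) * (1 - (1 - Real.exp (-(θ₂ * t))) ^ b) ≤
      (1 - (1 - Real.exp (-((w * θ₁ + (1 - w) * θ₂) * t))) ^ (w * a + (1 - w) * b)) *
        (1 - (1 - Real.exp (-((w * θ₂ + (1 - w) * θ₁) * t))) ^ (w * b + (1 - w) * a)) := by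
  set s₁ := θ₁ * t with hs₁
  set s₂ := θ₂ * t with hs₂
  set s₁' := (w * θ₁ + (1 - w) * θ₂) * t with hs₁'
  set s₂' := (w * θ₂ + (1 - w) * θ₁) * t with hs₂'
  set c := w * a + (1 - w) * b with hc
  set d := w * b + (1 - w) * a with hd
  have ht' := ht.le
  have h21 : 0 ≤ θ₂ - θ₁ := by linarith
  have hab : 0 ≤ a - b := by linarith
  have hw0 : 0 ≤ 1 - w := by linarith
  have hw2 : 0 ≤ 2*w - 1 := by linarith
  have hps₁ : 0 < s₁ := mul_pos hθ₁ ht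
  have h1 : s₁ ≤ s₁' := by
    rw [hs₁, hs₁']
    nlinarith [mul_nonneg (mul_nonneg hw0 h21) ht']
  have h2 : s₁' ≤ s₂' := by
    rw [hs₁', hs₂']
    nlinarith [mul_nonneg (mul_nonneg hw2 h21) ht']
  have h3 : s₂' ≤ s₂ := by
    rw [hs₂', hs₂]
    nlinarith [mul_nonneg (mul_nonneg hw0 h21) ht']
  have hsum : s₁ + s₂ = s₁' + s₂' := by rw [hs₁, hs₂, hs₁', hs₂']; ring
  have hbd : b ≤ d := by rw [hd]; nlinarith
  have hdc : d ≤ c := by rw [hc, hd]; nlinarith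
  have hca : c ≤ a := by rw [hc]; nlinarith
  have hd1 : 1 ≤ d := by linarith
  have habsum : a + b = c + d := by rw [hc, hd]; ring
  have hX : 0 < 1 - Real.exp (-s₁) := v_pos hps₁
  have hXY : 1 - Real.exp (-s₁) ≤ 1 - Real.exp (-s₂) := by
    have := Real.exp_le_exp.mpr (neg_le_neg (le_trans h1 (le_trans h2 h3)))
    linarith
  have hY1 : 1 - Real.exp (-s₂) < 1 := v_lt_one s₂
  calc (1 - (1 - Real.exp (-s₁)) ^ a) * (1 - (1 - Real.exp (-s₂)) ^ b)
      ≤ (1 - (1 - Real.exp (-s₁)) ^ c) * (1 - (1 - Real.exp (-s₂)) ^ d) :=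
        step1 hX hXY hY1 hb hbd hdc hca habsum
    _ ≤ (1 - (1 - Real.exp (-s₁')) ^ c) * (1 - (1 - Real.exp (-s₂')) ^ d) :=
        step2 hps₁ h1 h2 h3 hsum hd1 hdc

lemma core2 {t θ₁ θ₂ a b w : ℝ} (ht : 0 < t) (hθ₁ : 0 < θ₁) (hθ₂ : 0 < θ₂)
    (ha : 1 ≤ a) (hb : 1 ≤ b) (hT : (a - b) * (θ₁ - θ₂) ≤ 0)
    (hw0 : 0 ≤ w) (hw1 : w ≤ 1) :
    (1 - (1 - Real.exp (-(θ₁ * t))) ^ a) * (1 - (1 - Real.exp (-(θ₂ * t))) ^ b) ≤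
      (1 - (1 - Real.exp (-((w * θ₁ + (1 - w) * θ₂) * t))) ^ (w * a + (1 - w) * b)) *
        (1 - (1 - Real.exp (-((w * θ₂ + (1 - w) * θ₁) * t))) ^ (w * b + (1 - w) * a)) := by
  have hkey : (θ₁ ≤ θ₂ ∧ b ≤ a) ∨ (θ₂ ≤ θ₁ ∧ a ≤ b) := by
    rcases le_total θ₁ θ₂ with h | h
    · rcases le_total b a with h' | h'
      · exact Or.inl ⟨h, h'⟩
      · have h0 : 0 ≤ (a - b) * (θ₁ - θ₂) := by
          nlinarith
        rcases mul_eq_zero.mp (le_antisymm hT h0) with h2 | h2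
        · exact Or.inl ⟨h, by linarith⟩
        · exact Or.inr ⟨by linarith, h'⟩
    · rcases le_total a b with h' | h'
      · exact Or.inr ⟨h, h'⟩
      · have h0 : 0 ≤ (a - b) * (θ₁ - θ₂) :=
          mul_nonneg (by linarith) (by linarith)
        rcases mul_eq_zero.mp (le_antisymm hT h0) with h2 | h2
        · exact Or.inr ⟨h, by linarith⟩
        · exact Or.inl ⟨by linarith, h'⟩
  rcases hkey with ⟨h12, hba⟩ | ⟨h21, hab⟩
  · rcases le_total (1/2 : ℝ) w with hw | hw
    · exact core ht hθ₁ h12 hb hba hw hw1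
    · have h := core (w := 1 - w) ht hθ₁ h12 hb hba (by linarith) (by linarith)
      have e1 : ((1-w) * θ₁ + (1 - (1-w)) * θ₂) = (w * θ₂ + (1 - w) * θ₁) := by ring
      have e2 : (1-w) * a + (1 - (1-w)) * b = w * b + (1 - w) * a := by ring
      have e3 : ((1-w) * θ₂ + (1 - (1-w)) * θ₁) = (w * θ₁ + (1 - w) * θ₂) := by ring
      have e4 : (1-w) * b + (1 - (1-w)) * a = w * a + (1 - w) * b := by ring
      rw [e1, e2, e3, e4] at h
      exact h.trans_eq (mul_comm _ _)
  · rcases le_total (1/2 : ℝ) w with hw | hw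
    · have h := core ht hθ₂ h21 ha hab hw hw1
      exact ((mul_comm _ _).trans_le h).trans_eq (mul_comm _ _)
    · have h := core (w := 1 - w) ht hθ₂ h21 ha hab (by linarith) (by linarith)
      have e1 : ((1-w) * θ₂ + (1 - (1-w)) * θ₁) = (w * θ₁ + (1 - w) * θ₂) := by ring
      have e2 : (1-w) * b + (1 - (1-w)) * a = w * a + (1 - w) * b := by ring
      have e3 : ((1-w) * θ₁ + (1 - (1-w)) * θ₂) = (w * θ₂ + (1 - w) * θ₁) := by ring
      have e4 : (1-w) * a + (1 - (1-w)) * b = w * b + (1 - w) * a := by ring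
      rw [e1, e2, e3, e4] at h
      exact (mul_comm _ _).trans_le h

theorem max_st_order_chain_majorization (φ θ₁ θ₂ α₁ α₂ θ₁' θ₂' α₁' α₂' w : ℝ)
    (hφ : 0 < φ) (hθ₁ : 0 < θ₁) (hθ₂ : 0 < θ₂) (hα₁ : 1 ≤ α₁) (hα₂ : 1 ≤ α₂)
    (hT : (α₁ - α₂) * (θ₁ - θ₂) ≤ 0)
    (hw : w ∈ Set.Icc (0 : ℝ) 1)
    (hα₁' : α₁' = w * α₁ + (1 - w) * α₂) (hα₂' : α₂' = w * α₂ + (1 - w) * α₁)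
    (hθ₁' : θ₁' = w * θ₁ + (1 - w) * θ₂) (hθ₂' : θ₂' = w * θ₂ + (1 - w) * θ₁) :
    ∀ x : ℝ, 0 < x →
      (1 - (1 - Real.exp (-θ₁ * x ^ (-φ))) ^ α₁) * (1 - (1 - Real.exp (-θ₂ * x ^ (-φ))) ^ α₂) ≤
        (1 - (1 - Real.exp (-θ₁' * x ^ (-φ))) ^ α₁') *
          (1 - (1 - Real.exp (-θ₂' * x ^ (-φ))) ^ α₂') := by
  intro x hx
  obtain ⟨hw0, hw1⟩ := hw
  have ht : 0 < x ^ (-φ) := Real.rpow_pos_of_pos hx _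
  rw [hα₁', hα₂', hθ₁', hθ₂']
  simp only [neg_mul]
  exact core2 ht hθ₁ hθ₂ hα₁ hα₂ hT hw0 hw1
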